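/- Let Q be a quiver, G a group, and δ, δ': Q₁ → G two arrow weightings with associated smash coproduct coalgebras kQ ⋊ kG and kQ ⋊' kG. Given a vertex weighting γ: Q₀ → G, define θ_γ: kQ ⋊ kG → kQ ⋊' kG by θ_γ(p ⋊ g) = p ⋊' γ(s(p))⁻¹g. Then θ_γ is a coalgebra isomorphism commuting with the projections to kQ if and only if δ' = δ^γ, where δ^γ(a) = γ(t(a))⁻¹δ(a)γ(s(a)). -/

import Mathlib

open TensorProduct Quiver

noncomputable section
open scoped Classical

universe u v

variable (k : Type*) [Field k]

/-- The set of all paths in a quiver, with endpoints bundled. -/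
abbrev PathsIn (V : Type u) [Quiver.{v + 1} V] : Type (max u (v + 1)) := Σ a b : V, Quiver.Path a b

/-- The underlying vector space of the path coalgebra: the free `k`-module on paths. -/
abbrev PathCoalg (V : Type u) [Quiver.{v + 1} V] : Type _ := PathsIn V →₀ k

variable {V : Type u} [Quiver.{v + 1} V]

/-- The basis vector corresponding to a path. -/
def ιp (t : PathsIn V) : PathCoalg k V := Finsupp.single t 1

/-- The linear map on the path coalgebra induced by appending the arrow `e` to
paths ending at the source of `e` (and killing all other paths). -/
def consMap {b c : V} (e : b ⟶ c) : PathCoalg k V →ₗ[k] PathCoalg k V :=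
  Finsupp.lsum k fun t =>
    if h : t.2.1 = b then Finsupp.lsingle ⟨t.1, c, (h ▸ t.2.2).cons e⟩ else 0

/-- Comultiplication on basis paths:
`Δ(p) = Σ_{p = p₂p₁} p₂ ⊗ p₁ + t(p) ⊗ p + p ⊗ s(p)`, i.e. the sum of
`(second segment) ⊗ (first segment)` over all (possibly trivial) decompositions. -/
def deltaAux : ∀ {a b : V}, Quiver.Path a b → PathCoalg k V ⊗[k] PathCoalg k V
  | a, _, .nil => ιp k ⟨a, a, .nil⟩ ⊗ₜ[k] ιp k ⟨a, a, .nil⟩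
  | a, c, .cons p e =>
      ιp k ⟨c, c, .nil⟩ ⊗ₜ[k] ιp k ⟨a, c, p.cons e⟩
      + TensorProduct.map (consMap k e) LinearMap.id (deltaAux p)

/-- The comultiplication of the path coalgebra. -/
def ΔP : PathCoalg k V →ₗ[k] PathCoalg k V ⊗[k] PathCoalg k V :=
  Finsupp.lsum k fun t => LinearMap.toSpanSingleton k _ (deltaAux k t.2.2)

/-- The counit of the path coalgebra: `ε(p) = δ_{|p|,0}`. -/
def εP : PathCoalg k V →ₗ[k] k :=
  Finsupp.lsum k fun t => if t.2.2.length = 0 then LinearMap.id else 0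

variable {G : Type*} [Group G]

/-- The multiplicative extension of an arrow weighting `δ : Q₁ → G` to paths:
`δ(a_n ⋯ a_1) = δ(a_n) ⋯ δ(a_1)`, with value `1` on length-zero paths. -/
def wt (δ : ∀ {a b : V}, (a ⟶ b) → G) : ∀ {a b : V}, Quiver.Path a b → G
  | _, _, .nil => 1
  | _, _, .cons p e => δ e * wt @δ p

/-- The underlying vector space of the smash coproduct coalgebra `kQ ⋊ kG`:
the free `k`-module on symbols `p ⋊ g`. -/
abbrev SmashCoalg (V : Type u) [Quiver.{v + 1} V] (G : Type*) : Type _ :=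
  (PathsIn V × G) →₀ k

/-- The basis vector `p ⋊ g`. -/
def ιs (t : PathsIn V × G) : SmashCoalg k V G := Finsupp.single t 1

/-- Appending the arrow `e` to the path component of basis vectors `p ⋊ g`
(for `p` ending at the source of `e`), leaving the group component unchanged. -/
def consMapS {b c : V} (e : b ⟶ c) : SmashCoalg k V G →ₗ[k] SmashCoalg k V G :=
  Finsupp.lsum k fun t =>
    if h : t.1.2.1 = b then Finsupp.lsingle (⟨t.1.1, c, (h ▸ t.1.2.2).cons e⟩, t.2) else 0

/-- The value of the smash comultiplication on the basis vector `p ⋊ g`: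
`Δ(p ⋊ g) = Σ_{p = rq} (r ⋊ δ(q)g) ⊗ (q ⋊ g)`, where `q` runs over initial
segments of `p` (including the trivial decompositions). -/
def smashDeltaAux (δ : ∀ {a b : V}, (a ⟶ b) → G) (g : G) :
    ∀ {a b : V}, Quiver.Path a b → SmashCoalg k V G ⊗[k] SmashCoalg k V G
  | a, _, .nil => ιs k (⟨a, a, .nil⟩, g) ⊗ₜ[k] ιs k (⟨a, a, .nil⟩, g)
  | a, c, .cons p e =>
      ιs k (⟨c, c, .nil⟩, wt @δ (p.cons e) * g) ⊗ₜ[k] ιs k (⟨a, c, p.cons e⟩, g)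
      + TensorProduct.map (consMapS k e) LinearMap.id (smashDeltaAux @δ g p)

/-- The comultiplication of the smash coproduct coalgebra `kQ ⋊ kG`. -/
def smashDelta (δ : ∀ {a b : V}, (a ⟶ b) → G) :
    SmashCoalg k V G →ₗ[k] SmashCoalg k V G ⊗[k] SmashCoalg k V G :=
  Finsupp.lsum k fun t => LinearMap.toSpanSingleton k _ (smashDeltaAux k @δ t.2 t.1.2.2)

/-- The counit of `kQ ⋊ kG`: `ε(p ⋊ g) = δ_{|p|,0}`. -/
def smashEps : SmashCoalg k V G →ₗ[k] k :=
  Finsupp.lsum k fun t => if t.1.2.2.length = 0 then LinearMap.id else 0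

/-- The canonical projection `kQ ⋊ kG → kQ`, `p ⋊ g ↦ p`. -/
def smashProj : SmashCoalg k V G →ₗ[k] PathCoalg k V :=
  Finsupp.lsum k fun t => Finsupp.lsingle t.1

/-- The linear embedding `kQ → kQ ⋊ kG`, `b ↦ b ⋊ g`. -/
def embG (g : G) : PathCoalg k V →ₗ[k] SmashCoalg k V G :=
  Finsupp.lsum k fun t => Finsupp.lsingle (t, g)

/-- The map `θ_γ : kQ ⋊ kG → kQ ⋊' kG`, `p ⋊ g ↦ p ⋊' γ(s(p))⁻¹ g`,
associated with a vertex weighting `γ : Q₀ → G`. -/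
def thetaGamma (γ : V → G) : SmashCoalg k V G →ₗ[k] SmashCoalg k V G :=
  Finsupp.lsum k fun t => Finsupp.lsingle (t.1, (γ t.1.1)⁻¹ * t.2)


section AuxLemmas

variable {G : Type*} [Group G]

lemma thetaGamma_single (γ : V → G) (t : PathsIn V) (g : G) (c : k) :
    thetaGamma k γ (Finsupp.single (t, g) c) = Finsupp.single (t, (γ t.1)⁻¹ * g) c := by
  simp [thetaGamma]

lemma consMapS_single {b c : V} (e : b ⟶ c) (a : V) (p : Quiver.Path a b) (g : G) (x : k) :
    consMapS k e (Finsupp.single ((⟨a, b, p⟩ : PathsIn V), g) x)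
      = Finsupp.single ((⟨a, c, p.cons e⟩ : PathsIn V), g) x := by
  simp [consMapS]

lemma consMapS_single_ne {b c : V} (e : b ⟶ c) (a b' : V) (p : Quiver.Path a b') (g : G)
    (x : k) (hb : b' ≠ b) :
    consMapS k e (Finsupp.single ((⟨a, b', p⟩ : PathsIn V), g) x) = 0 := by
  simp [consMapS, hb]

lemma theta_consMapS (γ : V → G) {b c : V} (e : b ⟶ c) :
    thetaGamma k γ ∘ₗ consMapS k e = consMapS k e ∘ₗ thetaGamma k γ := by
  apply Finsupp.lhom_ext
  rintro ⟨⟨a, b', p⟩, g⟩ x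
  by_cases hb : b' = b
  · subst hb
    simp [consMapS_single, thetaGamma_single]
  · simp [consMapS_single_ne k e a b' p _ _ hb, thetaGamma_single]

lemma wt_twist (δ δ' : ∀ {a b : V}, (a ⟶ b) → G) (γ : V → G)
    (h : ∀ (a b : V) (e : a ⟶ b), δ' e = (γ b)⁻¹ * δ e * γ a) :
    ∀ {a b : V} (p : Quiver.Path a b), wt @δ' p = (γ b)⁻¹ * wt @δ p * γ a := by
  intro a b p
  induction p with
  | nil => simp [wt]
  | cons q e ih => rw [wt, wt, ih, h]; group

lemma aux_twist (δ δ' : ∀ {a b : V}, (a ⟶ b) → G) (γ : V → G)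
    (h : ∀ (a b : V) (e : a ⟶ b), δ' e = (γ b)⁻¹ * δ e * γ a) :
    ∀ {a b : V} (p : Quiver.Path a b) (g : G),
      TensorProduct.map (thetaGamma k γ) (thetaGamma k γ) (smashDeltaAux k @δ g p)
        = smashDeltaAux k @δ' ((γ a)⁻¹ * g) p
  | a, _, .nil, g => by
      simp [smashDeltaAux, ιs, thetaGamma_single]
  | a, c, .cons q e, g => by
      rw [smashDeltaAux, smashDeltaAux, map_add]
      congr 1
      · have hg : (γ c)⁻¹ * (wt @δ (q.cons e) * g)
            = wt @δ' (q.cons e) * ((γ a)⁻¹ * g) := by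
          rw [wt_twist @δ @δ' γ h]; group
        simp [ιs, thetaGamma_single, hg]
      · have hcomm : TensorProduct.map (thetaGamma k γ) (thetaGamma k γ)
              ∘ₗ TensorProduct.map (consMapS k e) LinearMap.id
            = TensorProduct.map (consMapS k e) LinearMap.id
              ∘ₗ TensorProduct.map (thetaGamma k γ) (thetaGamma k γ) := by
          rw [← TensorProduct.map_comp, ← TensorProduct.map_comp, theta_consMapS]
          simp
        have := DFunLike.congr_fun hcomm (smashDeltaAux k @δ g q)
        simp only [LinearMap.comp_apply] at this
        rw [this, aux_twist @δ @δ' γ h q g]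

lemma smashDelta_single (δ : ∀ {a b : V}, (a ⟶ b) → G) (t : PathsIn V) (g : G) (c : k) :
    smashDelta k @δ (Finsupp.single (t, g) c) = c • smashDeltaAux k @δ g t.2.2 := by
  simp [smashDelta, LinearMap.toSpanSingleton_apply]

end AuxLemmas

/-- For arrow weightings `δ, δ' : Q₁ → G` and a vertex
weighting `γ : Q₀ → G`, the map `θ_γ(p ⋊ g) = p ⋊' γ(s(p))⁻¹ g` is a coalgebra
isomorphism from `kQ ⋊ kG` to `kQ ⋊' kG` commuting with the projections to `kQ`
if and only if `δ' = δ^γ`, where `δ^γ(a) = γ(t(a))⁻¹ δ(a) γ(s(a))`. -/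
theorem thetaGamma_coalgebra_iso_iff_twist
    (δ δ' : ∀ {a b : V}, (a ⟶ b) → G) (γ : V → G) :
    (Function.Bijective (thetaGamma k (G := G) γ)
      ∧ (∀ x : SmashCoalg k V G, smashProj k (thetaGamma k γ x) = smashProj k x)
      ∧ (∀ x : SmashCoalg k V G,
          smashDelta k @δ' (thetaGamma k γ x)
            = TensorProduct.map (thetaGamma k γ) (thetaGamma k γ) (smashDelta k @δ x))
      ∧ (∀ x : SmashCoalg k V G, smashEps k (thetaGamma k γ x) = smashEps k x))
    ↔ ∀ (a b : V) (e : a ⟶ b), δ' e = (γ b)⁻¹ * δ e * γ a := by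
  constructor
  · rintro ⟨-, -, hΔ, -⟩ a b e
    have h1 := hΔ (Finsupp.single ((⟨a, b, Quiver.Path.nil.cons e⟩ : PathsIn V), γ a) (1 : k))
    rw [thetaGamma_single, smashDelta_single, smashDelta_single] at h1
    simp only [one_smul, smashDeltaAux, wt, ιs, map_add, TensorProduct.map_tmul,
      thetaGamma_single, consMapS_single, LinearMap.id_coe, id_eq, mul_one, one_mul,
      inv_mul_cancel] at h1
    have hne : ((⟨a, a, Quiver.Path.nil⟩ : PathsIn V), (1 : G))
        ≠ ((⟨a, b, Quiver.Path.nil.cons e⟩ : PathsIn V), (1 : G)) := by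
      intro hh
      simpa using congrArg (fun z => z.1.2.2.length) hh
    have h3 := congrArg (fun z => (TensorProduct.lid k k)
      (TensorProduct.map
        (Finsupp.lapply ((⟨b, b, Quiver.Path.nil⟩ : PathsIn V), δ' e))
        (Finsupp.lapply ((⟨a, b, Quiver.Path.nil.cons e⟩ : PathsIn V), (1 : G))) z)) h1
    simp only [map_add, TensorProduct.map_tmul, TensorProduct.lid_tmul, Finsupp.lapply_apply,
      Finsupp.single_apply, if_pos rfl, if_neg hne, smul_eq_mul, mul_one, mul_zero, zero_mul,
      add_zero, one_mul, if_true] at h3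
    by_cases hc : ((⟨b, b, Quiver.Path.nil⟩ : PathsIn V), (γ b)⁻¹ * (δ e * γ a))
        = ((⟨b, b, Quiver.Path.nil⟩ : PathsIn V), δ' e)
    · have hg := congrArg Prod.snd hc
      rw [mul_assoc]
      exact hg.symm
    · rw [if_neg hc] at h3
      exact absurd h3 one_ne_zero
  · intro h
    have hL : thetaGamma k (G := G) (fun v => (γ v)⁻¹) ∘ₗ thetaGamma k γ = LinearMap.id := by
      apply Finsupp.lhom_ext
      rintro ⟨t, g⟩ x
      simp [thetaGamma_single, mul_assoc]
    have hR : thetaGamma k (G := G) γ ∘ₗ thetaGamma k (fun v => (γ v)⁻¹) = LinearMap.id := by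
      apply Finsupp.lhom_ext
      rintro ⟨t, g⟩ x
      simp [thetaGamma_single, mul_assoc]
    refine ⟨?_, ?_, ?_, ?_⟩
    · exact Function.bijective_iff_has_inverse.2
        ⟨thetaGamma k (fun v => (γ v)⁻¹),
          fun x => by simpa using DFunLike.congr_fun hL x,
          fun x => by simpa using DFunLike.congr_fun hR x⟩
    · intro x
      induction x using Finsupp.induction_linear with
      | zero => simp
      | add f g hf hg => simp [map_add, hf, hg]
      | single t c =>
          obtain ⟨t, g⟩ := t
          simp [thetaGamma_single, smashProj]
    · intro x
      induction x using Finsupp.induction_linear with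
      | zero => simp
      | add f g hf hg => simp [map_add, hf, hg]
      | single t c =>
          obtain ⟨t, g⟩ := t
          rw [thetaGamma_single, smashDelta_single, smashDelta_single, map_smul,
            aux_twist k @δ @δ' γ h t.2.2 g]
    · intro x
      induction x using Finsupp.induction_linear with
      | zero => simp
      | add f g hf hg => simp [map_add, hf, hg]
      | single t c =>
          obtain ⟨t, g⟩ := t
          simp [thetaGamma_single, smashEps]
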